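/- For integers 0 ≤ k ≤ h, let f(h,k) be the maximum number of leaves of a rooted binary tree of height at most h no restriction of which is a balanced rooted binary tree of height more than k. Then f(h,k) = 2^k when h = k or k = 0, and for 0 < k < h, f(h,k) = Σ_{i=0}^{k} C(h−i−1, k−i)·2^i, where C(·,·) denotes the binomial coefficient. -/

import Mathlib

/-!
# Rooted binary phylogenetic trees

`RTree L` is the type of rooted binary trees with leaves labelled by elements of `L`:
every internal vertex has exactly two children (a left child and a right child), and
a tree with one leaf is a single vertex.
-/

inductive RTree (L : Type) : Type
  | leaf : L → RTree L
  | node : RTree L → RTree L → RTree L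

namespace RTree

variable {L : Type}

/-- The list of leaf labels of a rooted binary tree, read from left to right. -/
def leafList : RTree L → List L
  | leaf b => [b]
  | node l r => leafList l ++ leafList r

/-- The number of leaves of a rooted binary tree. -/
def numLeaves (T : RTree L) : ℕ := T.leafList.length

/-- The set of leaf labels of a rooted binary tree. -/
def leafSet (T : RTree L) : Set L := {b | b ∈ T.leafList}

/-- The height of a rooted binary tree: the maximum distance from the root to a leaf. -/
def height : RTree L → ℕ
  | leaf _ => 0
  | node l r => max (height l) (height r) + 1

/-- A rooted binary tree is balanced if all of its leaves are at the same distance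
from the root. -/
def IsBalanced : RTree L → Prop
  | leaf _ => True
  | node l r => IsBalanced l ∧ IsBalanced r ∧ height l = height r

/-- A rooted binary tree is phylogenetic if its leaves are labelled bijectively by a
finite set, i.e. all leaf labels are distinct. -/
def IsPhylo (T : RTree L) : Prop := T.leafList.Nodup

/-- `Embeds S T` is the subtree relation `S ⪯ T`: there is an injective map `f` from the
vertices of `S` to the vertices of `T` such that `f x = x` for every leaf `x` of `S`
(leaves being identified across trees by their labels) and
`f (x ∧ y) = f x ∧ f y` for all vertices `x`, `y` of `S`, where `∧` denotes the most
recent common ancestor.  Equivalently (for trees with distinct leaf labels), `S` is the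
restriction of `T` to the leaf set of `S`, up to rooted isomorphism; this structural
characterization is taken as the definition. -/
inductive Embeds : RTree L → RTree L → Prop
  | leaf (b : L) : Embeds (RTree.leaf b) (RTree.leaf b)
  | left {S l r : RTree L} : Embeds S l → Embeds S (RTree.node l r)
  | right {S l r : RTree L} : Embeds S r → Embeds S (RTree.node l r)
  | pair {s₁ s₂ l r : RTree L} :
      Embeds s₁ l → Embeds s₂ r → Embeds (RTree.node s₁ s₂) (RTree.node l r)
  | pair_swap {s₁ s₂ l r : RTree L} :
      Embeds s₁ r → Embeds s₂ l → Embeds (RTree.node s₁ s₂) (RTree.node l r)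

/-- `mast T₁ T₂` is the maximum cardinality of a subset `X ⊆ L(T₁) ∩ L(T₂)` such that
the restrictions `T₁|X` and `T₂|X` are isomorphic; equivalently, the maximum number of
leaves of a rooted binary phylogenetic tree `S` with `S ⪯ T₁` and `S ⪯ T₂`. -/
noncomputable def mast (T₁ T₂ : RTree L) : ℕ :=
  sSup {n | ∃ S : RTree L, S.IsPhylo ∧ Embeds S T₁ ∧ Embeds S T₂ ∧ S.numLeaves = n}

end RTree

/-- `fExt h k` is the maximum number of leaves of a rooted binary (phylogenetic) tree of
height at most `h` no restriction of which is a balanced rooted binary tree of height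
more than `k`.  (A restriction of `T` is any rooted binary tree `S` with `S ⪯ T`.) -/
noncomputable def fExt (h k : ℕ) : ℕ :=
  sSup {n | ∃ T : RTree ℕ, T.IsPhylo ∧ T.height ≤ h ∧
    (∀ S : RTree ℕ, RTree.Embeds S T → S.IsBalanced → S.height ≤ k) ∧ T.numLeaves = n}

namespace RTree

/-- The maximum height of a balanced tree embedding into `T`. -/
def balHeight {L : Type} : RTree L → ℕ
  | leaf _ => 0
  | node l r => max (max (balHeight l) (balHeight r)) (min (balHeight l) (balHeight r) + 1)

theorem height_le_balHeight {L : Type} {S T : RTree L} (hemb : Embeds S T)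
    (hbal : S.IsBalanced) : S.height ≤ T.balHeight := by
  induction hemb with
  | leaf b => simp [height, balHeight]
  | left h ih => have := ih hbal; simp only [balHeight]; omega
  | right h ih => have := ih hbal; simp only [balHeight]; omega
  | pair h1 h2 ih1 ih2 =>
      obtain ⟨b1, b2, heq⟩ := hbal
      have H1 := ih1 b1; have H2 := ih2 b2
      simp only [height, balHeight]; omega
  | pair_swap h1 h2 ih1 ih2 =>
      obtain ⟨b1, b2, heq⟩ := hbal
      have H1 := ih1 b1; have H2 := ih2 b2
      simp only [height, balHeight]; omega

theorem exists_balanced {L : Type} (T : RTree L) :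
    ∃ S : RTree L, Embeds S T ∧ S.IsBalanced ∧ S.height = T.balHeight := by
  induction T with
  | leaf b => exact ⟨leaf b, Embeds.leaf b, trivial, rfl⟩
  | node l r ihl ihr =>
    obtain ⟨Sl, el, bl, hl⟩ := ihl
    obtain ⟨Sr, er, br, hr⟩ := ihr
    rcases lt_trichotomy (balHeight l) (balHeight r) with hc | hc | hc
    · exact ⟨Sr, Embeds.right er, br, by simp only [balHeight]; omega⟩
    · refine ⟨node Sl Sr, Embeds.pair el er, ⟨bl, br, by omega⟩, ?_⟩
      simp only [height, balHeight]; omega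
    · exact ⟨Sl, Embeds.left el, bl, by simp only [balHeight]; omega⟩

theorem numLeaves_node {L : Type} (l r : RTree L) :
    (node l r).numLeaves = l.numLeaves + r.numLeaves := by
  simp [numLeaves, leafList]

end RTree

/-- The extremal function, defined by the natural recurrence. -/
def gAux : ℕ → ℕ → ℕ
  | 0, _ => 1
  | _+1, 0 => 1
  | h+1, k+1 => gAux h (k+1) + gAux h k

theorem gAux_pos : ∀ h k, 0 < gAux h k
  | 0, _ => Nat.one_pos
  | _+1, 0 => Nat.one_pos
  | h+1, k+1 => by
      have := gAux_pos h (k+1); have := gAux_pos h k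
      simp only [gAux]; omega

theorem gAux_zero (h : ℕ) : gAux h 0 = 1 := by cases h <;> rfl

theorem gAux_full : ∀ h k, h ≤ k → gAux h k = 2 ^ h
  | 0, _, _ => rfl
  | h+1, 0, hle => by omega
  | h+1, k+1, hle => by
      have h1 := gAux_full h (k+1) (by omega)
      have h2 := gAux_full h k (by omega)
      simp only [gAux, h1, h2]; ring

theorem numLeaves_le_gAux {L : Type} :
    ∀ (T : RTree L) (h k : ℕ), T.height ≤ h → T.balHeight ≤ k → T.numLeaves ≤ gAux h k := by
  intro T
  induction T with
  | leaf b => intro h k _ _; simp [RTree.numLeaves, RTree.leafList]; exact gAux_pos h k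
  | node l r ihl ihr =>
    intro h k hh hb
    simp only [RTree.height] at hh
    simp only [RTree.balHeight] at hb
    obtain ⟨h', rfl⟩ : ∃ h', h = h' + 1 := ⟨h - 1, by omega⟩
    obtain ⟨k', rfl⟩ : ∃ k', k = k' + 1 := ⟨k - 1, by omega⟩
    rw [RTree.numLeaves_node]
    rcases le_total (RTree.balHeight l) (RTree.balHeight r) with hc | hc
    · have H1 := ihl h' k' (by omega) (by omega)
      have H2 := ihr h' (k'+1) (by omega) (by omega)
      simp only [gAux]; omega
    · have H1 := ihl h' (k'+1) (by omega) (by omega)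
      have H2 := ihr h' k' (by omega) (by omega)
      simp only [gAux]; omega

/-- The extremal tree of height `h`, balanced-height `k`, with leaves labelled
`n, n+1, …`. -/
def buildT : ℕ → ℕ → ℕ → RTree ℕ
  | 0, _, n => RTree.leaf n
  | _+1, 0, n => RTree.leaf n
  | h+1, k+1, n => RTree.node (buildT h (k+1) n) (buildT h k (n + gAux h (k+1)))

theorem leafList_buildT : ∀ h k n, (buildT h k n).leafList = List.range' n (gAux h k)
  | 0, k, n => by simp [buildT, gAux, RTree.leafList]
  | h+1, 0, n => by simp [buildT, gAux, RTree.leafList]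
  | h+1, k+1, n => by
      simp only [buildT, RTree.leafList, leafList_buildT h (k+1) n,
        leafList_buildT h k (n + gAux h (k+1))]
      have := List.range'_append (s := n) (m := gAux h (k+1)) (n := gAux h k) (step := 1)
      simp only [one_mul] at this
      rw [this]
      simp only [gAux]

theorem height_buildT : ∀ h k n, (buildT h k n).height ≤ h
  | 0, _, _ => le_refl 0
  | _+1, 0, _ => by simp [buildT, RTree.height]
  | h+1, k+1, n => by
      have H1 := height_buildT h (k+1) n
      have H2 := height_buildT h k (n + gAux h (k+1))
      simp only [buildT, RTree.height]; omega

theorem balHeight_buildT : ∀ h k n, (buildT h k n).balHeight ≤ k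
  | 0, _, _ => Nat.zero_le _
  | _+1, 0, _ => le_refl 0
  | h+1, k+1, n => by
      have H1 := balHeight_buildT h (k+1) n
      have H2 := balHeight_buildT h k (n + gAux h (k+1))
      simp only [buildT, RTree.balHeight]; omega

theorem fExt_eq_gAux (h k : ℕ) : fExt h k = gAux h k := by
  have hmem : gAux h k ∈ {n | ∃ T : RTree ℕ, T.IsPhylo ∧ T.height ≤ h ∧
      (∀ S : RTree ℕ, RTree.Embeds S T → S.IsBalanced → S.height ≤ k) ∧ T.numLeaves = n} := by
    refine ⟨buildT h k 0, ?_, height_buildT h k 0, ?_, ?_⟩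
    · unfold RTree.IsPhylo
      rw [leafList_buildT]
      exact List.nodup_range'
    · intro S hS hbS
      exact le_trans (RTree.height_le_balHeight hS hbS) (balHeight_buildT h k 0)
    · simp [RTree.numLeaves, leafList_buildT, List.length_range']
  have hub : ∀ n ∈ {n | ∃ T : RTree ℕ, T.IsPhylo ∧ T.height ≤ h ∧
      (∀ S : RTree ℕ, RTree.Embeds S T → S.IsBalanced → S.height ≤ k) ∧ T.numLeaves = n},
      n ≤ gAux h k := by
    rintro n ⟨T, _, hh, hcond, rfl⟩
    obtain ⟨S, eS, bS, hS⟩ := RTree.exists_balanced T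
    exact numLeaves_le_gAux T h k hh (hS ▸ hcond S eS bS)
  exact le_antisymm (csSup_le ⟨_, hmem⟩ hub) (le_csSup ⟨_, hub⟩ hmem)

/-- The closed-form sum. -/
def smSum (h k : ℕ) : ℕ := ∑ i ∈ Finset.range (k + 1), Nat.choose (h - i - 1) (k - i) * 2 ^ i

theorem smSum_diag (h : ℕ) : smSum h h = 2 ^ h := by
  unfold smSum
  rw [Finset.sum_range_succ]
  have : ∑ i ∈ Finset.range h, Nat.choose (h - i - 1) (h - i) * 2 ^ i = 0 := by
    apply Finset.sum_eq_zero
    intro i hi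
    rw [Finset.mem_range] at hi
    rw [Nat.choose_eq_zero_of_lt (by omega)]
    ring
  rw [this]
  simp [Nat.sub_self]

theorem smSum_rec (h k : ℕ) (hk : k + 1 ≤ h) :
    smSum (h + 1) (k + 1) = smSum h (k + 1) + smSum h k := by
  unfold smSum
  rw [Finset.sum_range_succ, Finset.sum_range_succ (f := fun i => Nat.choose (h - i - 1) (k + 1 - i) * 2 ^ i)]
  have e1 : (h + 1 - (k+1) - 1).choose (k + 1 - (k+1)) = 1 := by
    rw [Nat.sub_self]; exact Nat.choose_zero_right _
  have e2 : (h - (k+1) - 1).choose (k + 1 - (k+1)) = 1 := by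
    rw [Nat.sub_self]; exact Nat.choose_zero_right _
  rw [e1, e2]
  have key : ∑ i ∈ Finset.range (k+1), Nat.choose (h + 1 - i - 1) (k + 1 - i) * 2 ^ i =
      ∑ i ∈ Finset.range (k+1), Nat.choose (h - i - 1) (k + 1 - i) * 2 ^ i +
      ∑ i ∈ Finset.range (k+1), Nat.choose (h - i - 1) (k - i) * 2 ^ i := by
    rw [← Finset.sum_add_distrib]
    apply Finset.sum_congr rfl
    intro i hi
    rw [Finset.mem_range] at hi
    have e3 : h + 1 - i - 1 = (h - i - 1) + 1 := by omega
    have e4 : k + 1 - i = (k - i) + 1 := by omega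
    rw [e3, e4, Nat.choose_succ_succ]
    ring
  omega

theorem gAux_eq_smSum : ∀ h k, k ≤ h → gAux h k = smSum h k := by
  intro h
  induction h with
  | zero =>
    intro k hk
    obtain rfl : k = 0 := Nat.le_zero.mp hk
    rw [smSum_diag]; rfl
  | succ h ih =>
    intro k hk
    match k with
    | 0 =>
      rw [gAux_zero]
      unfold smSum
      simp
    | k + 1 =>
      rcases Nat.lt_or_ge (k+1) (h+1) with hlt | hge
      · have hk1 : k + 1 ≤ h := by omega
        rw [smSum_rec h k hk1]
        simp only [gAux]
        rw [ih (k+1) hk1, ih k (by omega)]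
      · have : k + 1 = h + 1 := by omega
        rw [this, smSum_diag, gAux_full _ _ (le_refl _)]

/-- `f(h,k) = 2^k` when `h = k` or `k = 0`, and for `0 < k < h`,
`f(h,k) = Σ_{i=0}^{k} C(h-i-1, k-i)·2^i`. -/
theorem stmt_5 (h k : ℕ) (hkh : k ≤ h) :
    ((h = k ∨ k = 0) → fExt h k = 2 ^ k) ∧
    (0 < k → k < h →
      fExt h k = ∑ i ∈ Finset.range (k + 1), Nat.choose (h - i - 1) (k - i) * 2 ^ i) := by
  constructor
  · rintro (rfl | rfl)
    · rw [fExt_eq_gAux, gAux_full _ _ (le_refl _)]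
    · rw [fExt_eq_gAux, gAux_zero, pow_zero]
  · intro _ hkh'
    rw [fExt_eq_gAux, gAux_eq_smSum h k hkh]
    rfl
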